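/- Let 1 ≤ p < 2, let a ∈ ℂ, r > 0, and let f be holomorphic on the punctured disc B(a,r) \ {a} with ∫_{B(a,r)\{a}} |f|^p dλ^2 < ∞. Then in the Laurent expansion f(z) = Σ_{j=−∞}^{∞} b_j (z−a)^j, all coefficients b_j with j ≤ −2 vanish; that is, f has at most a simple pole at a. -/

import Mathlib

open MeasureTheory ENNReal Set

noncomputable section

/-- The circular mean over `[0, 2π]` of an `EReal`-valued function, computed as the
infimum over `n : ℕ` of the means of the truncations below at `-n`. -/
def circleMeanE (g : ℝ → EReal) : EReal :=
  ⨅ n : ℕ, (((2 * Real.pi)⁻¹ *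
    ∫ θ in (0:ℝ)..(2 * Real.pi), ((g θ) ⊔ ((-(n : ℝ) : ℝ) : EReal)).toReal : ℝ) : EReal)

/-- Plurisubharmonicity of a `[-∞, ∞)`-valued function on a set `G` (subharmonicity when
`E = ℂ`): upper semicontinuous on `G`, never `+∞`, not identically `-∞`, and satisfying the
sub-mean value inequality over every circle (in any complex line) whose closed disc
lies in `G`. -/
def PSHOn {E : Type*} [NormedAddCommGroup E] [NormedSpace ℂ E]
    (φ : E → EReal) (G : Set E) : Prop :=
  UpperSemicontinuousOn φ G ∧ (∀ z ∈ G, φ z ≠ ⊤) ∧ (¬ ∀ z ∈ G, φ z = ⊥) ∧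
  ∀ z ∈ G, ∀ w : E, (∀ ζ : ℂ, ‖ζ‖ ≤ 1 → z + ζ • w ∈ G) →
    φ z ≤ circleMeanE fun θ => φ (z + Complex.exp (θ * Complex.I) • w)

/-- A set `G` is pseudoconvex if `z ↦ -log dist(z, Gᶜ)` is plurisubharmonic on `G`
(for open `G`, `dist(z, Gᶜ) = dist(z, ∂G)`). -/
def Pseudoconvex {E : Type*} [NormedAddCommGroup E] [NormedSpace ℂ E] (G : Set E) : Prop :=
  PSHOn (fun z => ((-Real.log (Metric.infDist z Gᶜ) : ℝ) : EReal)) G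

/-- `e^{-x}` for `x : EReal`, with values in `ℝ≥0∞`. -/
def expNeg (x : EReal) : ℝ≥0∞ :=
  if x = ⊥ then ⊤ else if x = ⊤ then 0 else ENNReal.ofReal (Real.exp (-x.toReal))

/-- The Lelong number `ν(φ, z) = liminf_{w → z} φ(w) / log ‖w - z‖`. -/
def lelong {E : Type*} [NormedAddCommGroup E] [NormedSpace ℂ E]
    (φ : E → EReal) (z : E) : EReal :=
  Filter.liminf (fun w => φ w / ((Real.log ‖w - z‖ : ℝ) : EReal)) (nhdsWithin z {z}ᶜ)

/-- `log⁺ t = max(0, log t)`. -/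
def logPlus (t : ℝ) : ℝ := max 0 (Real.log t)

/-- The square of the Euclidean norm on `ℂⁿ`. -/
def eNormSq {n : ℕ} (z : Fin n → ℂ) : ℝ := ∑ i, Complex.normSq (z i)

/-- The Euclidean norm on `ℂⁿ`. -/
def eNorm {n : ℕ} (z : Fin n → ℂ) : ℝ := Real.sqrt (∑ i, Complex.normSq (z i))

/-- A domain: an open connected (hence nonempty) set. -/
def DomainSet {E : Type*} [TopologicalSpace E] (G : Set E) : Prop := IsOpen G ∧ IsConnected G

/-- Membership in the (unweighted) `p`-Bergman space `A^p(Ω)`: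
`f` is holomorphic on `Ω` and `∫_Ω |f|^p dλ < ∞`. -/
def MemAp {E : Type*} [NormedAddCommGroup E] [NormedSpace ℂ E] [MeasureSpace E]
    (p : ℝ) (Ω : Set E) (f : E → ℂ) : Prop :=
  DifferentiableOn ℂ f Ω ∧ (∫⁻ z in Ω, ENNReal.ofReal (‖f z‖ ^ p)) < ⊤

/-- The Hartogs domain `D_φ(G) = {(z,w) ∈ G × ℂᴺ : ‖w‖ < e^{-φ(z)}}`,
where `ℂᴺ` carries the maximum norm. -/
def hartogsDomain {M : ℕ} (N : ℕ) (φ : (Fin M → ℂ) → EReal) (G : Set (Fin M → ℂ)) :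
    Set ((Fin M → ℂ) × (Fin N → ℂ)) :=
  {zw | zw.1 ∈ G ∧ (‖zw.2‖₊ : ℝ≥0∞) < expNeg (φ zw.1)}

/-- The Levi form (complex Hessian) of a real-valued `C²` function `φ` at `z` along `w`,
computed within the set `G` from the second real Fréchet derivative:
`Σ_{j,k} ∂²φ/∂z_j∂z̄_k(z) w_j w̄_k = (D²φ(z)[w,w] + D²φ(z)[iw,iw])/4`. -/
def leviFormWithin {E : Type*} [NormedAddCommGroup E] [NormedSpace ℂ E]
    (φ : E → ℝ) (G : Set E) (z w : E) : ℝ :=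
  (iteratedFDerivWithin ℝ 2 φ G z ![w, w]
    + iteratedFDerivWithin ℝ 2 φ G z ![Complex.I • w, Complex.I • w]) / 4

/-- The Levi form (complex Hessian) of a real-valued `C²` function `φ` at `z` along `w`:
`Σ_{j,k} ∂²φ/∂z_j∂z̄_k(z) w_j w̄_k = (D²φ(z)[w,w] + D²φ(z)[iw,iw])/4`. -/
def leviFormAt {E : Type*} [NormedAddCommGroup E] [NormedSpace ℂ E]
    (φ : E → ℝ) (z w : E) : ℝ :=
  (iteratedFDeriv ℝ 2 φ z ![w, w]
    + iteratedFDeriv ℝ 2 φ z ![Complex.I • w, Complex.I • w]) / 4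

end

section SPaux
open Metric Complex Real Filter Asymptotics Topology


private lemma SP_circMean (f : ℂ → ℂ) (z : ℂ) (ρ : ℝ) (hρ : 0 < ρ)
    (hc : ContinuousOn f (closedBall z ρ))
    (hd : ∀ w ∈ ball z ρ, DifferentiableAt ℂ f w) :
    2 * π * ‖f z‖ ≤ ∫ θ in (0:ℝ)..(2*π), ‖f (circleMap z ρ θ)‖ := by
  have h := Complex.circleIntegral_sub_center_inv_smul_of_differentiable_on_off_countable hρ
    Set.countable_empty hc (fun w hw => hd w hw.1)
  have h2 : ‖(2 * ↑π * I : ℂ) • f z‖ = 2 * π * ‖f z‖ := by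
    simp [norm_smul, Complex.norm_I, abs_of_pos Real.pi_pos]
  rw [← h] at h2
  rw [← h2, circleIntegral]
  refine le_trans (intervalIntegral.norm_integral_le_integral_norm (by positivity)) ?_
  apply le_of_eq
  apply intervalIntegral.integral_congr
  intro θ _
  have hne : circleMap 0 ρ θ ≠ 0 := circleMap_ne_center hρ.ne'
  simp [norm_smul, deriv_circleMap, circleMap_sub_center, abs_of_pos hρ,
    inv_mul_cancel₀ (by simpa using hne)]
  field_simp

private lemma SP_polarLower (z : ℂ) (ρ₁ ρ₂ : ℝ) (h1 : 0 < ρ₁) (g : ℂ → ℝ≥0∞) :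
    ∫⁻ p in Ioo ρ₁ ρ₂ ×ˢ Ioo (-π) π, ENNReal.ofReal p.1 * g (z + Complex.polarCoord.symm p) ≤
      ∫⁻ w in (ball z ρ₂ \ closedBall z ρ₁), g w := by
  set B : ℝ × ℝ → ℝ × ℝ →L[ℝ] ℝ × ℝ := fun p =>
    LinearMap.toContinuousLinearMap (Matrix.toLin (Module.Basis.finTwoProd ℝ) (Module.Basis.finTwoProd ℝ)
      !![Real.cos p.2, -p.1 * Real.sin p.2; Real.sin p.2, p.1 * Real.cos p.2]) with hB
  have B_det : ∀ p, (B p).det = p.1 := by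
    intro p
    conv_rhs => rw [← one_mul p.1, ← Real.cos_sq_add_sin_sq p.2]
    simp only [hB, neg_mul, LinearMap.det_toContinuousLinearMap, LinearMap.det_toLin,
      Matrix.det_fin_two_of, sub_neg_eq_add]
    ring
  set ψ : ℝ × ℝ → ℝ × ℝ := fun p => (z.re, z.im) + polarCoord.symm p with hψ
  set s : Set (ℝ × ℝ) := Ioo ρ₁ ρ₂ ×ˢ Ioo (-π) π with hs
  have hsm : MeasurableSet s := measurableSet_Ioo.prod measurableSet_Ioo
  have hder : ∀ p ∈ s, HasFDerivWithinAt ψ (B p) s p := fun p _ =>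
    ((hasFDerivAt_polarCoord_symm p).const_add _).hasFDerivWithinAt
  have hsub : s ⊆ polarCoord.target := by
    rintro ⟨x, y⟩ ⟨hx, hy⟩
    exact ⟨lt_trans h1 hx.1, hy⟩
  have hinj : InjOn ψ s := by
    intro p hp q hq h
    exact polarCoord.symm.injOn (by simpa using hsub hp) (by simpa using hsub hq)
      (by simpa [hψ] using h)
  have key := lintegral_image_eq_lintegral_abs_det_fderiv_mul volume hsm hder hinj
    (fun x => g (Complex.measurableEquivRealProd.symm x))
  have he : MeasurePreserving (Complex.measurableEquivRealProd.symm) :=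
    Complex.volume_preserving_equiv_real_prod.symm
  have key2 := he.setLIntegral_comp_emb
    Complex.measurableEquivRealProd.symm.measurableEmbedding g (ψ '' s)
  have hcomp : ∀ p : ℝ × ℝ, Complex.measurableEquivRealProd.symm (ψ p)
      = z + Complex.polarCoord.symm p := by
    intro p
    have h1 : (polarCoord.symm p : ℝ × ℝ) = (p.1 * Real.cos p.2, p.1 * Real.sin p.2) := rfl
    apply Complex.ext <;>
      simp [hψ, h1, Complex.measurableEquivRealProd_symm_apply, Complex.polarCoord_symm_apply,
        -Complex.ofReal_cos, -Complex.ofReal_sin, mul_comm]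
  calc ∫⁻ p in s, ENNReal.ofReal p.1 * g (z + Complex.polarCoord.symm p)
      = ∫⁻ p in s, ENNReal.ofReal |(B p).det| *
          g (Complex.measurableEquivRealProd.symm (ψ p)) := by
        apply setLIntegral_congr_fun hsm
        intro p hp
        dsimp only
        rw [hcomp, B_det, abs_of_pos (lt_trans h1 hp.1.1)]
    _ = ∫⁻ x in ψ '' s, g (Complex.measurableEquivRealProd.symm x) := key.symm
    _ = ∫⁻ w in Complex.measurableEquivRealProd.symm '' (ψ '' s), g w := key2
    _ ≤ ∫⁻ w in (ball z ρ₂ \ closedBall z ρ₁), g w := by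
        apply lintegral_mono_set
        rintro w ⟨x, ⟨p, hp, rfl⟩, rfl⟩
        rw [hcomp]
        have habs : dist (z + Complex.polarCoord.symm p) z = p.1 := by
          rw [Complex.dist_eq, add_sub_cancel_left, Complex.norm_polarCoord_symm,
            abs_of_pos (lt_trans h1 hp.1.1)]
        exact ⟨by rw [mem_ball, habs]; exact hp.1.2,
          by rw [mem_closedBall, habs]; exact not_le.2 hp.1.1⟩

private lemma SP_pointwiseBound (a : ℂ) (r : ℝ) (f : ℂ → ℂ)
    (hf : DifferentiableOn ℂ f (ball a r \ {a}))
    (z : ℂ) (hz0 : z ≠ a) (hzr : dist z a < r / 2) :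
    ENNReal.ofReal (dist z a / 4) * (ENNReal.ofReal (2 * π * ‖f z‖)
        * ENNReal.ofReal (dist z a / 4))
      ≤ ∫⁻ w in ball a r \ {a}, ENNReal.ofReal ‖f w‖ := by
  have hopen : IsOpen (ball a r \ {a}) := isOpen_ball.sdiff isClosed_singleton
  set s : ℝ := dist z a with hsdef
  have hs0 : 0 < s := dist_pos.2 hz0
  -- the open annulus around z is inside the domain
  have hann : ball z (s/2) \ closedBall z (s/4) ⊆ ball a r \ {a} := by
    rintro w ⟨hw1, -⟩
    rw [mem_ball] at hw1
    constructor
    · rw [mem_ball]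
      calc dist w a ≤ dist w z + dist z a := dist_triangle w z a
        _ < s/2 + s := by linarith
        _ < r := by linarith
    · intro hwa
      rw [mem_singleton_iff] at hwa
      subst hwa
      rw [dist_comm] at hw1
      linarith
  -- in fact the closed annulus too
  have hannc : ∀ ρ ∈ Ioo (s/4) (s/2), closedBall z ρ ⊆ ball a r \ {a} := by
    rintro ρ hρ w hw
    rw [mem_closedBall] at hw
    constructor
    · rw [mem_ball]
      calc dist w a ≤ dist w z + dist z a := dist_triangle w z a
        _ ≤ ρ + s := by linarith
        _ < r := by linarith [hρ.2]
    · intro hwa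
      rw [mem_singleton_iff] at hwa
      subst hwa
      rw [dist_comm] at hw
      linarith [hρ.2]
  have hcm : ∀ (ρ θ : ℝ), z + Complex.polarCoord.symm (ρ, θ) = circleMap z ρ θ := by
    intro ρ θ
    rw [Complex.polarCoord_symm_apply, circleMap, Complex.exp_mul_I]
    push_cast
    ring
  -- per-radius circle bound in lintegral form
  have inner : ∀ ρ ∈ Ioo (s/4) (s/2),
      ENNReal.ofReal (2 * π * ‖f z‖) ≤
        ∫⁻ θ in Ioo (-π) π, ENNReal.ofReal ‖f (z + Complex.polarCoord.symm (ρ, θ))‖ := by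
    intro ρ hρ
    have hρ0 : 0 < ρ := lt_trans (by positivity) hρ.1
    have hcont : Continuous fun θ => ‖f (circleMap z ρ θ)‖ := by
      apply Continuous.norm
      rw [continuous_iff_continuousAt]
      intro θ
      have hmem : circleMap z ρ θ ∈ ball a r \ {a} :=
        hannc ρ hρ (circleMap_mem_closedBall z hρ0.le θ)
      exact (hf.continuousOn.continuousAt (hopen.mem_nhds hmem)).comp
        (continuous_circleMap z ρ).continuousAt
    have h1 : 2 * π * ‖f z‖ ≤ ∫ θ in (0:ℝ)..(2*π), ‖f (circleMap z ρ θ)‖ :=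
      SP_circMean f z ρ hρ0 (hf.continuousOn.mono (hannc ρ hρ))
        (fun w hw => hf.differentiableAt (hopen.mem_nhds (hannc ρ hρ (ball_subset_closedBall hw))))
    have hper : Function.Periodic (fun θ => ‖f (circleMap z ρ θ)‖) (2*π) := by
      intro θ; simp [periodic_circleMap z ρ θ]
    have h2 : (∫ θ in (0:ℝ)..(2*π), ‖f (circleMap z ρ θ)‖)
        = ∫ θ in (-π)..π, ‖f (circleMap z ρ θ)‖ := by
      have := hper.intervalIntegral_add_eq (-π) 0
      simpa [neg_add_eq_sub, (by ring : -π + 2*π = π)] using this.symm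
    calc ENNReal.ofReal (2 * π * ‖f z‖)
        ≤ ENNReal.ofReal (∫ θ in (-π)..π, ‖f (circleMap z ρ θ)‖) := by
          apply ENNReal.ofReal_le_ofReal; rw [← h2]; exact h1
      _ = ENNReal.ofReal (∫ θ in Ioc (-π) π, ‖f (circleMap z ρ θ)‖) := by
          rw [intervalIntegral.integral_of_le (by linarith [Real.pi_pos])]
      _ ≤ ∫⁻ θ in Ioc (-π) π, ENNReal.ofReal ‖f (circleMap z ρ θ)‖ := le_of_eq
          (ofReal_integral_eq_lintegral_ofReal
            (hcont.integrableOn_Ioc) (ae_of_all _ fun θ => norm_nonneg _))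
      _ = ∫⁻ θ in Ioo (-π) π, ENNReal.ofReal ‖f (circleMap z ρ θ)‖ := by
          exact setLIntegral_congr Ioo_ae_eq_Ioc.symm
      _ = _ := by simp_rw [hcm]
  -- Fubini / product lower bound
  have hAE : AEMeasurable (fun p : ℝ × ℝ => ENNReal.ofReal ‖f (z + Complex.polarCoord.symm p)‖)
      ((volume.restrict (Ioo (s/4) (s/2))).prod (volume.restrict (Ioo (-π) π))) := by
    rw [Measure.prod_restrict]
    apply (Measurable.comp_aemeasurable ENNReal.measurable_ofReal)
    apply ContinuousOn.aemeasurable ?_ (measurableSet_Ioo.prod measurableSet_Ioo)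
    apply ContinuousOn.norm
    have hcont2 : Continuous fun p : ℝ × ℝ => z + Complex.polarCoord.symm p := by
      have heq : (fun p : ℝ × ℝ => z + Complex.polarCoord.symm p)
          = fun p => z + (((p.1 * Real.cos p.2 : ℝ) : ℂ)
            + ((p.1 * Real.sin p.2 : ℝ) : ℂ) * Complex.I) := by
        funext p; rw [Complex.polarCoord_symm_apply]; push_cast; ring
      rw [heq]; fun_prop
    apply hf.continuousOn.comp hcont2.continuousOn
    rintro ⟨ρ, θ⟩ hp
    dsimp only
    rw [hcm]
    exact hannc ρ hp.1 (circleMap_mem_closedBall z (lt_trans (by positivity) hp.1.1).le θ)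
  calc ENNReal.ofReal (s/4) * (ENNReal.ofReal (2 * π * ‖f z‖) * ENNReal.ofReal (s/4))
      = ENNReal.ofReal (s/4) * (ENNReal.ofReal (2 * π * ‖f z‖) * volume (Ioo (s/4) (s/2))) := by
        rw [Real.volume_Ioo, (by ring : s/2 - s/4 = s/4)]
    _ = ENNReal.ofReal (s/4) * ∫⁻ ρ in Ioo (s/4) (s/2), ENNReal.ofReal (2 * π * ‖f z‖) := by
        rw [setLIntegral_const]
    _ ≤ ENNReal.ofReal (s/4) * ∫⁻ ρ in Ioo (s/4) (s/2),
          ∫⁻ θ in Ioo (-π) π, ENNReal.ofReal ‖f (z + Complex.polarCoord.symm (ρ, θ))‖ := by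
        refine mul_le_mul_right ?_ _
        apply lintegral_mono_ae
        rw [ae_restrict_iff' measurableSet_Ioo]
        exact ae_of_all _ inner
    _ = ENNReal.ofReal (s/4) * ∫⁻ p in Ioo (s/4) (s/2) ×ˢ Ioo (-π) π,
          ENNReal.ofReal ‖f (z + Complex.polarCoord.symm p)‖ := by
        rw [Measure.volume_eq_prod, ← Measure.prod_restrict, lintegral_prod _ hAE]
    _ = ∫⁻ p in Ioo (s/4) (s/2) ×ˢ Ioo (-π) π,
          ENNReal.ofReal (s/4) * ENNReal.ofReal ‖f (z + Complex.polarCoord.symm p)‖ := by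
        rw [lintegral_const_mul' _ _ ofReal_ne_top]
    _ ≤ ∫⁻ p in Ioo (s/4) (s/2) ×ˢ Ioo (-π) π,
          ENNReal.ofReal p.1 * ENNReal.ofReal ‖f (z + Complex.polarCoord.symm p)‖ := by
        apply lintegral_mono_ae
        rw [ae_restrict_iff' (measurableSet_Ioo.prod measurableSet_Ioo)]
        apply ae_of_all
        rintro ⟨ρ, θ⟩ hp
        gcongr
        exact le_of_lt hp.1.1
    _ ≤ ∫⁻ w in ball z (s/2) \ closedBall z (s/4), ENNReal.ofReal ‖f w‖ :=
        SP_polarLower z (s/4) (s/2) (by positivity) _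
    _ ≤ ∫⁻ w in ball a r \ {a}, ENNReal.ofReal ‖f w‖ := lintegral_mono_set hann



private lemma SP_lint_div_top (a : ℂ) (δ : ℝ) (hδ : 0 < δ) (c : ℝ) (hc : 0 < c) :
    ∫⁻ w in ball a δ \ {a}, ENNReal.ofReal (c / dist w a ^ 2) = ⊤ := by
  set q : ℝ := 2⁻¹ with hq
  have hq0 : 0 < q := by norm_num
  have hq1 : q < 1 := by norm_num
  set A : ℕ → Set ℂ := fun n => ball a (δ * q ^ n) \ ball a (δ * q ^ (n + 1)) with hA
  have hAmeas : ∀ n, MeasurableSet (A n) :=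
    fun n => measurableSet_ball.diff measurableSet_ball
  have hABd : ∀ n, ∀ w ∈ A n, δ * q ^ (n + 1) ≤ dist w a ∧ dist w a < δ * q ^ n := by
    rintro n w ⟨h1, h2⟩
    exact ⟨not_lt.1 (fun h => h2 (mem_ball.2 h)), mem_ball.1 h1⟩
  have hdisj : Pairwise (Function.onFun Disjoint A) := by
    have key : ∀ m n : ℕ, m < n → Disjoint (A m) (A n) := by
      intro m n hmn
      rw [Set.disjoint_left]
      intro w hwm hwn
      have h1 := (hABd m w hwm).1
      have h2 := (hABd n w hwn).2
      have : δ * q ^ n ≤ δ * q ^ (m + 1) := by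
        apply mul_le_mul_of_nonneg_left _ hδ.le
        exact pow_le_pow_of_le_one hq0.le hq1.le hmn
      linarith
    intro m n hmn
    rcases hmn.lt_or_gt with h | h
    · exact key m n h
    · exact (key n m h).symm
  have hsub : (⋃ n, A n) ⊆ ball a δ \ {a} := by
    rintro w ⟨_, ⟨n, rfl⟩, hw⟩
    obtain ⟨h1, h2⟩ := hABd n w hw
    constructor
    · rw [mem_ball]
      calc dist w a < δ * q ^ n := h2
        _ ≤ δ * 1 := by
            apply mul_le_mul_of_nonneg_left _ hδ.le
            exact pow_le_one₀ hq0.le hq1.le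
        _ = δ := mul_one δ
    · simp only [mem_singleton_iff]
      intro h
      subst h
      simp only [dist_self] at h1
      nlinarith [pow_pos hq0 (n+1)]
  have hterm : ∀ n, ENNReal.ofReal (3 * c / 4) * (NNReal.pi : ℝ≥0∞) ≤
      ∫⁻ w in A n, ENNReal.ofReal (c / dist w a ^ 2) := by
    intro n
    have hrn : 0 < δ * q ^ n := by positivity
    have hvol : volume (A n) = (ENNReal.ofReal ((δ * q ^ n) ^ 2)
        - ENNReal.ofReal ((δ * q ^ (n + 1)) ^ 2)) * (NNReal.pi : ℝ≥0∞) := by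
      rw [hA]
      rw [measure_diff (ball_subset_ball
          (mul_le_mul_of_nonneg_left (pow_le_pow_of_le_one hq0.le hq1.le (Nat.le_succ n)) hδ.le))
        measurableSet_ball.nullMeasurableSet (measure_ball_lt_top).ne]
      simp only [Complex.volume_ball]
      rw [← ENNReal.ofReal_pow (by positivity : (0:ℝ) ≤ δ * q ^ n),
        ← ENNReal.ofReal_pow (by positivity : (0:ℝ) ≤ δ * q ^ (n+1)),
        ← ENNReal.sub_mul (fun _ _ => coe_ne_top)]
    calc ENNReal.ofReal (3 * c / 4) * (NNReal.pi : ℝ≥0∞)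
        = ENNReal.ofReal (c / (δ * q ^ n) ^ 2) * volume (A n) := by
          rw [hvol, ← ENNReal.ofReal_sub _ (by positivity), ← mul_assoc,
            ← ENNReal.ofReal_mul (by positivity)]
          congr 3
          have h1 : (δ * q ^ (n + 1)) ^ 2 = (δ * q ^ n) ^ 2 / 4 := by
            rw [hq]; ring
          rw [h1]
          field_simp
          ring
      _ = ∫⁻ _ in A n, ENNReal.ofReal (c / (δ * q ^ n) ^ 2) ∂volume := by
          rw [setLIntegral_const]
      _ ≤ ∫⁻ w in A n, ENNReal.ofReal (c / dist w a ^ 2) := by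
          apply lintegral_mono_ae
          rw [ae_restrict_iff' (hAmeas n)]
          apply ae_of_all
          intro w hw
          obtain ⟨h1, h2⟩ := hABd n w hw
          have hd0 : 0 < dist w a := lt_of_lt_of_le (by positivity) h1
          apply ENNReal.ofReal_le_ofReal
          gcongr
  apply top_le_iff.1
  calc (⊤ : ℝ≥0∞) = ∑' _ : ℕ, ENNReal.ofReal (3 * c / 4) * (NNReal.pi : ℝ≥0∞) := by
        rw [ENNReal.tsum_const_eq_top_of_ne_zero]
        apply mul_ne_zero
        · rw [Ne, ENNReal.ofReal_eq_zero, not_le]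
          positivity
        · rw [Ne, ENNReal.coe_eq_zero, ← NNReal.coe_eq_zero]
          exact Real.pi_ne_zero
    _ ≤ ∑' n, ∫⁻ w in A n, ENNReal.ofReal (c / dist w a ^ 2) := ENNReal.tsum_le_tsum hterm
    _ = ∫⁻ w in ⋃ n, A n, ENNReal.ofReal (c / dist w a ^ 2) :=
        (lintegral_iUnion hAmeas hdisj _).symm
    _ ≤ ∫⁻ w in ball a δ \ {a}, ENNReal.ofReal (c / dist w a ^ 2) := lintegral_mono_set hsub

end SPaux

section SPmain
open Metric Complex Real Filter Asymptotics Topology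

/-- For `1 ≤ p < 2`, a holomorphic function on a punctured disc whose `p`-th
power is integrable has at most a simple pole at the center: all Laurent coefficients `b_j`
with `j ≤ -2` vanish, i.e. `f(z) = c/(z-a) + g(z)` with `g` holomorphic on the whole disc. -/
theorem simplePole_of_Lp (p : ℝ) (hp1 : 1 ≤ p) (hp2 : p < 2) (a : ℂ) (r : ℝ) (hr : 0 < r)
    (f : ℂ → ℂ) (hf : DifferentiableOn ℂ f (Metric.ball a r \ {a}))
    (hint : (∫⁻ z in Metric.ball a r \ {a}, ENNReal.ofReal (‖f z‖ ^ p)) < ⊤) :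
    ∃ (c : ℂ) (g : ℂ → ℂ), DifferentiableOn ℂ g (Metric.ball a r) ∧
      ∀ z ∈ Metric.ball a r \ {a}, f z = c / (z - a) + g z := by
  have hopen : IsOpen (ball a r \ {a}) := isOpen_ball.sdiff isClosed_singleton
  have hball : Metric.ball a r ∈ 𝓝 a := isOpen_ball.mem_nhds (mem_ball_self hr)
  -- L¹ finiteness
  set M : ℝ≥0∞ := ∫⁻ z in Metric.ball a r \ {a}, ENNReal.ofReal ‖f z‖ with hM
  have hMfin : M ≠ ⊤ := by
    have hle : M ≤ ∫⁻ z in Metric.ball a r \ {a}, (1 + ENNReal.ofReal (‖f z‖ ^ p)) := by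
      apply lintegral_mono
      intro z
      rcases le_or_gt ‖f z‖ 1 with h | h
      · calc ENNReal.ofReal ‖f z‖ ≤ 1 := by
              simpa using ENNReal.ofReal_le_ofReal h
          _ ≤ _ := le_self_add
      · calc ENNReal.ofReal ‖f z‖ ≤ ENNReal.ofReal (‖f z‖ ^ p) := by
              apply ENNReal.ofReal_le_ofReal
              calc ‖f z‖ = ‖f z‖ ^ (1:ℝ) := (Real.rpow_one _).symm
                _ ≤ ‖f z‖ ^ p := Real.rpow_le_rpow_of_exponent_le h.le hp1
          _ ≤ _ := le_add_self
    have heq : ∫⁻ z in Metric.ball a r \ {a}, (1 + ENNReal.ofReal (‖f z‖ ^ p))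
        = volume (Metric.ball a r \ {a}) + ∫⁻ z in Metric.ball a r \ {a},
            ENNReal.ofReal (‖f z‖ ^ p) := by
      rw [lintegral_add_left measurable_const, lintegral_const,
        Measure.restrict_apply MeasurableSet.univ, univ_inter, one_mul]
    apply ne_top_of_le_ne_top _ hle
    rw [heq]
    apply (ENNReal.add_lt_top.2 ⟨?_, hint⟩).ne
    exact lt_of_le_of_lt (measure_mono diff_subset) measure_ball_lt_top
  -- pointwise bound
  have hbd : ∀ z, z ≠ a → dist z a < r/2 → ‖(z - a)^2 * f z‖ ≤ 8 * M.toReal / π := by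
    intro z hz hzr
    have h := SP_pointwiseBound a r f hf z hz hzr
    rw [← ENNReal.ofReal_mul (by positivity), ← ENNReal.ofReal_mul (by positivity)] at h
    rw [ENNReal.ofReal_le_iff_le_toReal hMfin] at h
    have hd : dist z a = ‖z - a‖ := by rw [dist_eq_norm]
    have hnorm : ‖(z - a)^2 * f z‖ = ‖z - a‖^2 * ‖f z‖ := by
      rw [norm_mul, norm_pow]
    rw [hnorm, ← hd]
    have hπ := Real.pi_pos
    rw [le_div_iff₀ hπ]
    nlinarith [norm_nonneg (f z), dist_nonneg (x := z) (y := a)]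
  -- removable singularity for F
  set F : ℂ → ℂ := fun z => (z - a)^2 * f z with hFdef
  have hFdiff : DifferentiableOn ℂ F (Metric.ball a r \ {a}) :=
    (((differentiable_id.sub_const a).pow 2).differentiableOn).mul hf
  have hFa : F a = 0 := by simp [hFdef]
  have hFo : (fun z => F z - F a) =o[𝓝[≠] a] fun z => (z - a)⁻¹ := by
    rw [hFa]
    simp only [sub_zero]
    have h1 : F =O[𝓝[≠] a] (fun _ => (1:ℝ)) := by
      rw [isBigO_iff]
      refine ⟨8 * M.toReal / π, ?_⟩
      have hev : ∀ᶠ z in 𝓝[≠] a, dist z a < r / 2 :=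
        eventually_nhdsWithin_of_eventually_nhds
          (Metric.eventually_nhds_iff.2 ⟨r/2, by positivity, fun {y} hy => hy⟩)
      filter_upwards [hev, self_mem_nhdsWithin] with z h1 h2
      simpa [hFdef] using hbd z h2 h1
    have h2 : (fun _ : ℂ => (1:ℝ)) =o[𝓝[≠] a] fun z => (z - a)⁻¹ := by
      rw [isLittleO_const_left]
      right
      have hnorm : Tendsto (fun z : ℂ => ‖z - a‖) (𝓝[≠] a) (𝓝[>] 0) := by
        apply tendsto_nhdsWithin_of_tendsto_nhds_of_eventually_within
        · have : Continuous fun z : ℂ => ‖z - a‖ := (continuous_id.sub continuous_const).norm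
          simpa using this.tendsto a |>.mono_left nhdsWithin_le_nhds
        · filter_upwards [self_mem_nhdsWithin] with z hz
          simpa [sub_eq_zero] using hz
      have := tendsto_inv_nhdsGT_zero.comp hnorm
      apply this.congr
      intro z
      simp
    exact h1.trans_isLittleO h2
  have key := Complex.differentiableOn_update_limUnder_of_isLittleO hball hFdiff hFo
  set h : ℂ → ℂ := Function.update F a (limUnder (𝓝[≠] a) F) with hh
  have hhF : ∀ z, z ≠ a → h z = F z := fun z hz => Function.update_of_ne hz _ F
  -- h a = 0
  have hha : h a = 0 := by
    by_contra hne
    have hcont : ContinuousAt h a := (key.differentiableAt hball).continuousAt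
    have hev : ∀ᶠ z in 𝓝 a, ‖h a‖ / 2 ≤ ‖h z‖ := by
      have := hcont.eventually (Metric.ball_mem_nhds (h a) (half_pos (norm_pos_iff.2 hne)))
      filter_upwards [this] with z hz
      have h2 : ‖h z - h a‖ < ‖h a‖ / 2 := by simpa [dist_eq_norm] using hz
      have h3 : ‖h a‖ - ‖h z‖ ≤ ‖h a - h z‖ := norm_sub_norm_le _ _
      have h4 : ‖h a - h z‖ = ‖h z - h a‖ := norm_sub_rev _ _
      linarith
    obtain ⟨δ, hδ0, hδ⟩ := Metric.eventually_nhds_iff.1 hev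
    set δ' : ℝ := min δ r with hδ'
    have hδ'0 : 0 < δ' := lt_min hδ0 hr
    have htop := SP_lint_div_top a δ' hδ'0 (‖h a‖/2) (half_pos (norm_pos_iff.2 hne))
    have hle : ∫⁻ w in ball a δ' \ {a}, ENNReal.ofReal ((‖h a‖/2) / dist w a ^ 2) ≤ M := by
      calc ∫⁻ w in ball a δ' \ {a}, ENNReal.ofReal ((‖h a‖/2) / dist w a ^ 2)
          ≤ ∫⁻ w in ball a δ' \ {a}, ENNReal.ofReal ‖f w‖ := by
            apply lintegral_mono_ae
            rw [ae_restrict_iff' (measurableSet_ball.diff (measurableSet_singleton a))]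
            apply ae_of_all
            rintro w ⟨hw1, hw2⟩
            apply ENNReal.ofReal_le_ofReal
            have hwa : w ≠ a := hw2
            have hd0 : 0 < dist w a := dist_pos.2 hwa
            have hb : ‖h a‖ / 2 ≤ ‖h w‖ :=
              hδ (lt_of_lt_of_le (mem_ball.1 hw1) (min_le_left _ _))
            rw [hhF w hwa] at hb
            have : ‖F w‖ = dist w a ^ 2 * ‖f w‖ := by
              rw [hFdef]
              simp only [norm_mul, norm_pow, dist_eq_norm]
            rw [this] at hb
            rw [div_le_iff₀ (by positivity)]
            linarith
        _ ≤ M := lintegral_mono_set (by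
            apply diff_subset_diff_left
            exact ball_subset_ball (min_le_right _ _))
    rw [htop] at hle
    exact hMfin (top_le_iff.1 hle)
  -- construct c and g
  have hg2 : DifferentiableOn ℂ (dslope h a) (Metric.ball a r) :=
    (differentiableOn_dslope hball).2 key
  refine ⟨dslope h a a, dslope (dslope h a) a, (differentiableOn_dslope hball).2 hg2, ?_⟩
  intro z hz
  have hza : z ≠ a := hz.2
  have hzsub : z - a ≠ 0 := sub_ne_zero.2 hza
  have e1 : dslope h a z = (z - a) * f z := by
    rw [dslope_of_ne h hza, slope_def_field, hhF z hza, hha, hFdef]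
    field_simp
    ring
  have e2 : dslope (dslope h a) a z = f z - dslope h a a / (z - a) := by
    rw [dslope_of_ne _ hza, slope_def_field, e1]
    field_simp
  rw [e2]
  ring


end SPmain
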